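/- Let S be a feasible schedule for a PFB instance in which all jobs are released at time 0 (r_j = 0 for all j). Then there exists a feasible permutation schedule Ŝ (ordered by some permutation of the jobs) such that C_j(Ŝ) = C_j(S) for every job j ∈ {1,…,n}. -/

import Mathlib

/-- A PFB instance has `m+1` machines (indexed by `Fin (m+1)`, so at least one) and
`n+1` jobs (indexed by `Fin (n+1)`, so at least one). `p i` is the processing time of
machine `i`, `b i` its maximum batch size, `r j` the release date of job `j`.
A schedule `c` assigns to machine `i` and job `j` the completion time `c i j`.
`Feasible p b r c` says: (i) each job finishes on the first machine no earlier than its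
release date plus `p 0`; (ii) consecutive machines leave enough processing time;
(iii) two jobs with different completion times on a machine differ by at least the
processing time (jobs with equal completion time form one batch); (iv) at most `b i`
jobs complete at any given time on machine `i`. -/
def Feasible {m n : ℕ} (p b : Fin (m + 1) → ℕ) (r : Fin (n + 1) → ℕ)
    (c : Fin (m + 1) → Fin (n + 1) → ℕ) : Prop :=
  (∀ j, r j + p 0 ≤ c 0 j) ∧
  (∀ (i : Fin m) (j : Fin (n + 1)), c i.castSucc j + p i.succ ≤ c i.succ j) ∧
  (∀ (i : Fin (m + 1)) (j j' : Fin (n + 1)),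
      c i j ≠ c i j' → c i j + p i ≤ c i j' ∨ c i j' + p i ≤ c i j) ∧
  (∀ (i : Fin (m + 1)) (t : ℕ),
      (Finset.univ.filter (fun j => c i j = t)).card ≤ b i)

/-- `c` is a permutation schedule ordered by the permutation `σ`:
on every machine the completion times are nondecreasing along `σ`. -/
def OrderedBy {m n : ℕ} (c : Fin (m + 1) → Fin (n + 1) → ℕ)
    (σ : Equiv.Perm (Fin (n + 1))) : Prop :=
  ∀ i : Fin (m + 1), Monotone fun j => c i (σ j)

lemma sortedLE {N : ℕ} (f g : Fin N → ℕ) (d : ℕ) (h : ∀ j, f j + d ≤ g j) (k : Fin N) :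
    f (Tuple.sort f k) + d ≤ g (Tuple.sort g k) := by
  classical
  set S : Finset (Fin N) :=
    (Finset.Iic k).image (fun l => (Tuple.sort f)⁻¹ (Tuple.sort g l)) with hS
  have hinj : Function.Injective (fun l => (Tuple.sort f)⁻¹ (Tuple.sort g l)) :=
    fun a b hab => (Tuple.sort g).injective ((Tuple.sort f)⁻¹.injective hab)
  have hcard : (Finset.Iio k).card < S.card := by
    rw [hS, Finset.card_image_of_injective _ hinj]
    simp [Fin.card_Iio, Fin.card_Iic]
  have : ∃ x ∈ S, x ∉ Finset.Iio k := by
    by_contra hcon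
    push_neg at hcon
    exact absurd (Finset.card_le_card hcon) (not_le.mpr hcard)
  obtain ⟨x, hxS, hx⟩ := this
  obtain ⟨l, hl, hxl⟩ := Finset.mem_image.mp hxS
  have hkx : k ≤ x := le_of_not_gt (by simpa using hx)
  calc f (Tuple.sort f k) + d ≤ f (Tuple.sort f x) + d :=
        Nat.add_le_add_right (Tuple.monotone_sort f hkx) d
    _ = f (Tuple.sort g l) + d := by rw [← hxl]; simp
    _ ≤ g (Tuple.sort g l) := h _
    _ ≤ g (Tuple.sort g k) := Tuple.monotone_sort g (Finset.mem_Iic.mp hl)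

/-- if all release dates are `0`, then for every feasible schedule `c`
there is a feasible permutation schedule (ordered by some permutation) with exactly
the same completion time for every job on the last machine. -/
theorem stmt9 {m n : ℕ} (p b : Fin (m + 1) → ℕ) (r : Fin (n + 1) → ℕ)
    (hp : ∀ i, 1 ≤ p i) (hb : ∀ i, 1 ≤ b i ∧ b i ≤ n + 1)
    (hr : ∀ j, r j = 0)
    (c : Fin (m + 1) → Fin (n + 1) → ℕ) (hc : Feasible p b r c) :
    ∃ chat : Fin (m + 1) → Fin (n + 1) → ℕ,
      Feasible p b r chat ∧ (∃ σ : Equiv.Perm (Fin (n + 1)), OrderedBy chat σ) ∧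
      ∀ j : Fin (n + 1), chat (Fin.last m) j = c (Fin.last m) j := by
  classical
  obtain ⟨hc1, hc2, hc3, hc4⟩ := hc
  set τ : Fin (m + 1) → Equiv.Perm (Fin (n + 1)) := fun i => Tuple.sort (c i) with hτ
  set σ : Equiv.Perm (Fin (n + 1)) := τ (Fin.last m) with hσ
  refine ⟨fun i j => c i (τ i (σ⁻¹ j)), ⟨?_, ?_, ?_, ?_⟩, ⟨σ, ?_⟩, ?_⟩
  · intro j
    have := hc1 (τ 0 (σ⁻¹ j))
    simpa [hr] using this
  · intro i j
    exact sortedLE (c i.castSucc) (c i.succ) (p i.succ) (fun j' => hc2 i j') (σ⁻¹ j)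
  · intro i j j' hne
    exact hc3 i _ _ hne
  · intro i t
    have hbij : (Finset.univ.filter (fun j => c i (τ i (σ⁻¹ j)) = t)) =
        Finset.image (fun j => σ ((τ i)⁻¹ j)) (Finset.univ.filter fun j => c i j = t) := by
      ext j
      simp only [Finset.mem_filter, Finset.mem_image, Finset.mem_univ, true_and]
      constructor
      · intro hj
        exact ⟨τ i (σ⁻¹ j), hj, by simp⟩
      · rintro ⟨a, ha, rfl⟩
        simpa using ha
    rw [hbij, Finset.card_image_of_injective _
      (fun a b hab => (τ i)⁻¹.injective (σ.injective hab))]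
    exact hc4 i t
  · intro i j j' hjj'
    simp only [Equiv.Perm.inv_def, Equiv.symm_apply_apply]
    exact Tuple.monotone_sort (c i) hjj'
  · intro j
    simp [hσ]
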